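/- Under the attributed Erdős–Rényi graph pair model G(n,p,s_u; m,q,s_a) with q = o(1), s_a = Θ(1), and m q s_a² ≥ (1+ε) log n for some constant ε > 0, run only Step 1 of Algorithm AttrRich with threshold x = (1−δ_x) m q s_a², where 1−δ_x = Δ_x/log(1/q) for the constant Δ_x = max{1, 3/(1+ε)}. Then with probability tending to 1 as n → ∞, the resulting anchor set S1 equals exactly {(i, Π*(i)) : i a user}, i.e., Step 1 alone exactly recovers Π* using only the user–attribute edges. -/

import Mathlib

open MeasureTheory ProbabilityTheory Filter Finset
open scoped ENNReal NNReal

noncomputable section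

namespace AttrAlign

/-- The Bernoulli measure on `Bool` with success probability `r` (clamped to `[0,1]`). -/
def bern (r : ℝ) : Measure Bool :=
  (PMF.bernoulli (min (Real.toNNReal r) 1) (min_le_right _ _)).toMeasure

/-- The uniform measure on a finite type (the zero measure if the type is empty). -/
def uniformMeasure (α : Type*) [Fintype α] [MeasurableSpace α] : Measure α := by
  classical
  exact if h : Nonempty α then (@PMF.uniformOfFintype α _ h).toMeasure else 0

instance permMeasurableSpace (n : ℕ) : MeasurableSpace (Equiv.Perm (Fin n)) := ⊤

/-- Sample space for the attributed Erdős–Rényi graph pair model `G(n,p,s_u; m,q,s_a)`: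
base user–user edge indicators, base user–attribute edge indicators, the two subsampling
indicator families for `G₁`, the two subsampling indicator families for `G₂`, and the
anonymizing permutation `Π*`.  Only the entries with `i < j` of the user–user indicator
matrices are used. -/
abbrev Config (n m : ℕ) :=
  (Fin n → Fin n → Bool) × (Fin n → Fin m → Bool) ×
    (Fin n → Fin n → Bool) × (Fin n → Fin m → Bool) ×
    (Fin n → Fin n → Bool) × (Fin n → Fin m → Bool) × Equiv.Perm (Fin n)

/-- i.i.d. `Bern(r)` measure on a `k × l` matrix of Booleans. -/
def edgeMeasure (k l : ℕ) (r : ℝ) : Measure (Fin k → Fin l → Bool) :=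
  Measure.pi fun _ => Measure.pi fun _ => bern r

/-- The law of the attributed Erdős–Rényi graph pair model `G(n,p,s_u; m,q,s_a)`:
all edge indicators are independent, base user–user edges are `Bern(p)`, base
user–attribute edges are `Bern(q)`, the user–user subsampling indicators are `Bern(s_u)`,
the user–attribute subsampling indicators are `Bern(s_a)`, and the permutation `Π*` is
uniform. -/
def attrMeasure (n m : ℕ) (p q su sa : ℝ) : Measure (Config n m) :=
  (edgeMeasure n n p).prod ((edgeMeasure n m q).prod ((edgeMeasure n n su).prod
    ((edgeMeasure n m sa).prod ((edgeMeasure n n su).prod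
      ((edgeMeasure n m sa).prod (uniformMeasure (Equiv.Perm (Fin n))))))))

variable {n m : ℕ}

def uu0 (ω : Config n m) : Fin n → Fin n → Bool := ω.1
def ua0 (ω : Config n m) : Fin n → Fin m → Bool := ω.2.1
def suG1 (ω : Config n m) : Fin n → Fin n → Bool := ω.2.2.1
def saG1 (ω : Config n m) : Fin n → Fin m → Bool := ω.2.2.2.1
def suG2 (ω : Config n m) : Fin n → Fin n → Bool := ω.2.2.2.2.1
def saG2 (ω : Config n m) : Fin n → Fin m → Bool := ω.2.2.2.2.2.1
/-- The true permutation `Π*`. -/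
def pstar (ω : Config n m) : Equiv.Perm (Fin n) := ω.2.2.2.2.2.2

/-- Symmetrized edge indicator on unordered pairs of users (no self loops). -/
def symEdge {k : ℕ} (f : Fin k → Fin k → Bool) (i j : Fin k) : Bool :=
  if i < j then f i j else if j < i then f j i else false

/-- Adjacency of users `i` and `j` in `G₁`. -/
def G1uu (ω : Config n m) (i j : Fin n) : Bool :=
  symEdge (fun a b => uu0 ω a b && suG1 ω a b) i j

/-- Adjacency of users `i` and `j` in `G₂`. -/
def G2uu (ω : Config n m) (i j : Fin n) : Bool :=
  symEdge (fun a b => uu0 ω a b && suG2 ω a b) i j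

/-- Adjacency of users `i` and `j` in the anonymized graph `G₂'`, obtained by applying
`Π*` to the users of `G₂`. -/
def G2puu (ω : Config n m) (i j : Fin n) : Bool :=
  G2uu ω ((pstar ω).symm i) ((pstar ω).symm j)

/-- Adjacency of user `i` and attribute `a` in `G₁`. -/
def G1ua (ω : Config n m) (i : Fin n) (a : Fin m) : Bool := ua0 ω i a && saG1 ω i a

/-- Adjacency of user `i` and attribute `a` in `G₂`. -/
def G2ua (ω : Config n m) (i : Fin n) (a : Fin m) : Bool := ua0 ω i a && saG2 ω i a

/-- Adjacency of user `j` and attribute `a` in the anonymized graph `G₂'`. -/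
def G2pua (ω : Config n m) (j : Fin n) (a : Fin m) : Bool :=
  G2ua ω ((pstar ω).symm j) a

/-- `C i j`: the number of attributes adjacent to user `i` in `G₁` and to user `j` in `G₂'`. -/
def CC (ω : Config n m) (i j : Fin n) : ℕ :=
  (univ.filter fun a : Fin m => G1ua ω i a = true ∧ G2pua ω j a = true).card

/-- The anchor set `{(i,j) : C_ij > x}`. -/
def anchors (x : ℝ) (ω : Config n m) : Finset (Fin n × Fin n) := by
  classical exact univ.filter fun ij : Fin n × Fin n => x < (CC ω ij.1 ij.2 : ℝ)

/-- No two distinct pairs of `S` share a coordinate. -/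
def noConflict {k : ℕ} (S : Finset (Fin k × Fin k)) : Prop :=
  ∀ a ∈ S, ∀ b ∈ S, (a.1 = b.1 ∨ a.2 = b.2) → a = b

/-- Users of `G₁` not matched by the anchor set `S`. -/
def unmatched1 (S : Finset (Fin n × Fin n)) : Finset (Fin n) := by
  classical exact univ.filter fun i : Fin n => ∀ j, (i, j) ∉ S

/-- Users of `G₂'` not matched by the anchor set `S`. -/
def unmatched2 (S : Finset (Fin n × Fin n)) : Finset (Fin n) := by
  classical exact univ.filter fun j : Fin n => ∀ i, (i, j) ∉ S

/-- `W i j`: the number of pairs `(k,l) ∈ S` with `k` adjacent to `i` in `G₁` and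
`l` adjacent to `j` in `G₂'`. -/
def W (ω : Config n m) (S : Finset (Fin n × Fin n)) (i j : Fin n) : ℕ := by
  classical
  exact (S.filter fun kl : Fin n × Fin n =>
    G1uu ω i kl.1 = true ∧ G2puu ω j kl.2 = true).card

end AttrAlign

open AttrAlign


namespace AttrAlign



instance instMSCPerm' (α : Type*) : @MeasurableSingletonClass α ⊤ :=
  @MeasurableSingletonClass.mk α ⊤ (fun _ => MeasurableSpace.measurableSet_top)

lemma measure_coe_finset {α : Type*} [MeasurableSpace α] [MeasurableSingletonClass α]
    (μ : Measure α) (s : Finset α) : μ ↑s = ∑ a ∈ s, μ {a} := by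
  have h1 : (↑s : Set α) = ⋃ b ∈ s, {b} := by ext; simp
  rw [h1, measure_biUnion_finset
    (fun x _ y _ hxy => by simp [Function.onFun, Set.disjoint_singleton, hxy])
    (fun b _ => measurableSet_singleton b)]

lemma measure_ext_singleton {α : Type*} [Fintype α] [MeasurableSpace α]
    [MeasurableSingletonClass α] {μ ν : Measure α} (h : ∀ a, μ {a} = ν {a}) : μ = ν := by
  ext s hs
  have hsf : s = ↑(s.toFinite.toFinset) := by simp
  rw [hsf, measure_coe_finset, measure_coe_finset]
  exact Finset.sum_congr rfl fun a _ => h a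

def cnt {B : Type*} {M : ℕ} (P : B → Prop) [DecidablePred P] (v : Fin M → B) : ℕ :=
  (univ.filter fun a => P (v a)).card

variable {B : Type*} [Countable B] [MeasurableSpace B] [MeasurableSingletonClass B]

lemma cnt_le {M : ℕ} (P : B → Prop) [DecidablePred P] (v : Fin M → B) : cnt P v ≤ M := by
  simpa [cnt] using (Finset.card_filter_le univ fun a => P (v a))

lemma pi_cnt_single {M : ℕ} (ν : Measure B) [IsProbabilityMeasure ν]
    (P : B → Prop) [DecidablePred P] (j : ℕ) :
    (Measure.pi fun _ : Fin M => ν) {v | cnt P v = j}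
      = (M.choose j : ℝ≥0∞) * ν {b | P b} ^ j * ν {b | ¬ P b} ^ (M - j) := by
  classical
  have hsub : ∀ T : Finset (Fin M),
      {v : Fin M → B | univ.filter (fun a => P (v a)) = T} =
        Set.univ.pi fun a => if a ∈ T then {b | P b} else {b | ¬ P b} := by
    intro T; ext v
    simp only [Set.mem_setOf_eq, Set.mem_pi, Set.mem_univ, forall_true_left, Finset.ext_iff,
      Finset.mem_filter, Finset.mem_univ, true_and]
    refine forall_congr' fun a => ?_
    by_cases ha : a ∈ T <;> simp [ha]
  have hmeasT : ∀ T : Finset (Fin M),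
      (Measure.pi fun _ : Fin M => ν) {v | univ.filter (fun a => P (v a)) = T}
        = ν {b | P b} ^ T.card * ν {b | ¬ P b} ^ (M - T.card) := by
    intro T
    rw [hsub, Measure.pi_pi]
    simp only [apply_ite ν]
    rw [Finset.prod_ite (fun _ => ν {b | P b}) (fun _ => ν {b | ¬ P b})]
    have h2 : univ.filter (fun a : Fin M => a ∈ T) = T := by ext a; simp
    have h3 : univ.filter (fun a : Fin M => a ∉ T) = Tᶜ := by ext a; simp
    rw [h2, h3, Finset.prod_const, Finset.prod_const, Finset.card_compl, Fintype.card_fin]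
  have hdec : {v : Fin M → B | cnt P v = j}
      = ⋃ T ∈ powersetCard j (univ : Finset (Fin M)),
          {v | univ.filter (fun a => P (v a)) = T} := by
    ext v
    simp only [Set.mem_setOf_eq, Set.mem_iUnion, Finset.mem_powersetCard, exists_prop]
    constructor
    · intro h; exact ⟨univ.filter fun a => P (v a), ⟨Finset.filter_subset _ _ |>.trans (by simp), h⟩, rfl⟩
    · rintro ⟨T, ⟨-, hT⟩, rfl⟩; exact hT
  rw [hdec, measure_biUnion_finset]
  · rw [Finset.sum_congr rfl fun T hT => by
      rw [hmeasT T, (Finset.mem_powersetCard.1 hT).2]]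
    rw [Finset.sum_const, Finset.card_powersetCard, Finset.card_univ, Fintype.card_fin,
      nsmul_eq_mul, mul_assoc]
  · intro T hT T' hT' hne
    simp only [Function.onFun]
    apply Set.disjoint_left.2
    intro v hv hv'
    exact hne (hv ▸ hv')
  · intro T _
    exact MeasurableSet.of_discrete

lemma pi_cnt_eq {M : ℕ} (ν : Measure B) [IsProbabilityMeasure ν]
    (P : B → Prop) [DecidablePred P] (Q : ℕ → Prop) [DecidablePred Q] :
    (Measure.pi fun _ : Fin M => ν) {v | Q (cnt P v)} =
      ∑ j ∈ (range (M + 1)).filter Q,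
        (M.choose j : ℝ≥0∞) * ν {b | P b} ^ j * ν {b | ¬ P b} ^ (M - j) := by
  classical
  have hdec : {v : Fin M → B | Q (cnt P v)}
      = ⋃ j ∈ (range (M + 1)).filter Q, {v | cnt P v = j} := by
    ext v
    simp only [Set.mem_setOf_eq, Set.mem_iUnion, Finset.mem_filter, Finset.mem_range, exists_prop]
    constructor
    · intro h; exact ⟨cnt P v, ⟨Nat.lt_succ_of_le (cnt_le P v), h⟩, rfl⟩
    · rintro ⟨j, ⟨-, hj⟩, rfl⟩; exact hj
  rw [hdec, measure_biUnion_finset]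
  · exact Finset.sum_congr rfl fun j _ => pi_cnt_single ν P j
  · intro j _ j' _ hne
    simp only [Function.onFun]
    apply Set.disjoint_left.2
    intro v hv hv'
    exact hne (hv ▸ hv')
  · intro j _
    exact MeasurableSet.of_discrete



lemma tilt_sum_le (M k : ℕ) (ra rb t : ℝ) (hra : 0 ≤ ra) (hrb : 0 ≤ rb) (ht : 0 < t)
    (Q : ℕ → Prop) [DecidablePred Q] (hQ : ∀ j, Q j → t ^ k ≤ t ^ j) :
    ∑ j ∈ (range (M + 1)).filter Q, (M.choose j : ℝ) * ra ^ j * rb ^ (M - j)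
      ≤ (rb + ra * t) ^ M / t ^ k := by
  rw [le_div_iff₀ (by positivity)]
  calc (∑ j ∈ (range (M + 1)).filter Q, (M.choose j : ℝ) * ra ^ j * rb ^ (M - j)) * t ^ k
      = ∑ j ∈ (range (M + 1)).filter Q, (M.choose j : ℝ) * ra ^ j * rb ^ (M - j) * t ^ k := by
        rw [Finset.sum_mul]
    _ ≤ ∑ j ∈ (range (M + 1)).filter Q, (M.choose j : ℝ) * ra ^ j * rb ^ (M - j) * t ^ j := by
        apply Finset.sum_le_sum
        intro j hj
        exact mul_le_mul_of_nonneg_left (hQ j (Finset.mem_filter.1 hj).2) (by positivity)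
    _ ≤ ∑ j ∈ range (M + 1), (M.choose j : ℝ) * ra ^ j * rb ^ (M - j) * t ^ j :=
        Finset.sum_le_sum_of_subset_of_nonneg (Finset.filter_subset _ _)
          (fun j _ _ => by positivity)
    _ = (ra * t + rb) ^ M := by
        rw [add_pow]
        exact Finset.sum_congr rfl fun j _ => by rw [mul_pow]; ring
    _ = (rb + ra * t) ^ M := by rw [add_comm]

variable {B : Type*} [Countable B] [MeasurableSpace B] [MeasurableSingletonClass B]

lemma pi_tail_le {M : ℕ} (ν : Measure B) [IsProbabilityMeasure ν]
    (P : B → Prop) [DecidablePred P] (Q : ℕ → Prop) [DecidablePred Q]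
    (k : ℕ) (ra t : ℝ) (hra0 : 0 ≤ ra) (hra1 : ra ≤ 1)
    (hν : ν {b | P b} = ENNReal.ofReal ra) (ht : 0 < t)
    (hQ : ∀ j, Q j → t ^ k ≤ t ^ j)
    (hpi : (Measure.pi fun _ : Fin M => ν) {v | Q (cnt P v)} =
      ∑ j ∈ (range (M + 1)).filter Q,
        (M.choose j : ℝ≥0∞) * ν {b | P b} ^ j * ν {b | ¬ P b} ^ (M - j)) :
    (Measure.pi fun _ : Fin M => ν) {v | Q (cnt P v)}
      ≤ ENNReal.ofReal (((1 - ra) + ra * t) ^ M / t ^ k) := by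
  have hc : ν {b | ¬ P b} = ENNReal.ofReal (1 - ra) := by
    have h1 : {b | ¬ P b} = {b | P b}ᶜ := rfl
    rw [h1, prob_compl_eq_one_sub MeasurableSet.of_discrete, hν,
      ← ENNReal.ofReal_one, ← ENNReal.ofReal_sub _ hra0]
  rw [hpi, hν, hc]
  have hterm : ∀ j ∈ (range (M + 1)).filter Q,
      (M.choose j : ℝ≥0∞) * ENNReal.ofReal ra ^ j * ENNReal.ofReal (1 - ra) ^ (M - j)
        = ENNReal.ofReal ((M.choose j : ℝ) * ra ^ j * (1 - ra) ^ (M - j)) := by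
    intro j _
    rw [ENNReal.ofReal_mul (mul_nonneg (Nat.cast_nonneg _) (pow_nonneg hra0 j)),
      ENNReal.ofReal_mul (Nat.cast_nonneg _),
      ENNReal.ofReal_pow hra0, ENNReal.ofReal_pow (by linarith), ENNReal.ofReal_natCast]
  rw [Finset.sum_congr rfl hterm, ← ENNReal.ofReal_sum_of_nonneg (fun j _ => mul_nonneg (mul_nonneg (Nat.cast_nonneg _) (pow_nonneg hra0 _)) (pow_nonneg (by linarith) _))]
  refine ENNReal.ofReal_le_ofReal ?_
  have := tilt_sum_le M k ra (1 - ra) t hra0 (by linarith) ht Q hQ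
  linarith [this]

lemma tail_exp_bound (M k : ℕ) (r t x : ℝ) (hr0 : 0 ≤ r) (hr1 : r ≤ 1) (ht : 0 < t)
    (hk : x * Real.log t ≤ (k : ℝ) * Real.log t) :
    ((1 - r) + r * t) ^ M / t ^ k
      ≤ Real.exp ((M : ℝ) * (r * (t - 1)) - x * Real.log t) := by
  have hbase0 : (0:ℝ) ≤ (1 - r) + r * t := by nlinarith
  have hbase : (1 - r) + r * t ≤ Real.exp (r * (t - 1)) := by
    have h := Real.add_one_le_exp (r * (t - 1))
    nlinarith
  have hA : ((1 - r) + r * t) ^ M ≤ Real.exp ((M : ℝ) * (r * (t - 1))) := by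
    calc ((1 - r) + r * t) ^ M ≤ (Real.exp (r * (t - 1))) ^ M :=
          pow_le_pow_left₀ hbase0 hbase M
      _ = Real.exp ((M : ℝ) * (r * (t - 1))) := by
          rw [← Real.exp_nat_mul]
  have hB : Real.exp (x * Real.log t) ≤ t ^ k := by
    calc Real.exp (x * Real.log t) ≤ Real.exp ((k : ℝ) * Real.log t) := Real.exp_le_exp.2 hk
      _ = t ^ k := by rw [Real.exp_nat_mul, Real.exp_log ht]
  calc ((1 - r) + r * t) ^ M / t ^ k
      ≤ Real.exp ((M : ℝ) * (r * (t - 1))) / Real.exp (x * Real.log t) :=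
        div_le_div₀ (Real.exp_nonneg _) hA (Real.exp_pos _) hB
    _ = Real.exp ((M : ℝ) * (r * (t - 1)) - x * Real.log t) := by rw [← Real.exp_sub]





open scoped ENNReal NNReal

variable {n m : ℕ}

instance instMSCPermFin (n : ℕ) : MeasurableSingletonClass (Equiv.Perm (Fin n)) :=
  ⟨fun _ => MeasurableSpace.measurableSet_top⟩

instance instProbBern (r : ℝ) : IsProbabilityMeasure (bern r) := by
  unfold bern; infer_instance

instance instProbEdge (k l : ℕ) (r : ℝ) : IsProbabilityMeasure (edgeMeasure k l r) := by
  unfold edgeMeasure; infer_instance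

instance instProbUniform (α : Type*) [Fintype α] [MeasurableSpace α] [Nonempty α] :
    IsProbabilityMeasure (uniformMeasure α) := by
  unfold uniformMeasure
  rw [dif_pos ‹Nonempty α›]
  infer_instance

instance instProbAttr (n m : ℕ) (p q su sa : ℝ) :
    IsProbabilityMeasure (attrMeasure n m p q su sa) := by
  unfold attrMeasure; infer_instance

lemma bern_true {r : ℝ} (h0 : 0 ≤ r) (h1 : r ≤ 1) : bern r {true} = ENNReal.ofReal r := by
  rw [bern, PMF.toMeasure_apply_singleton _ _ (measurableSet_singleton _), PMF.bernoulli_apply]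
  have hle : Real.toNNReal r ≤ 1 := by
    rw [← Real.toNNReal_one]
    exact Real.toNNReal_mono h1
  have hle' : ((Real.toNNReal r : ℝ≥0∞)) ≤ 1 := by exact_mod_cast hle
  have hmin : ((Real.toNNReal r : ℝ≥0∞)) ⊓ 1 = (Real.toNNReal r : ℝ≥0∞) := inf_eq_left.2 hle'
  rw [cond_true]
  rw [min_eq_left hle]
  rfl

lemma pi_singleton {ι : Type*} [Fintype ι] {X : ι → Type*} [∀ i, MeasurableSpace (X i)]
    (ν : ∀ i, Measure (X i)) [∀ i, SigmaFinite (ν i)] (g : ∀ i, X i) :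
    Measure.pi ν {g} = ∏ i, ν i {g i} := by
  have h : ({g} : Set (∀ i, X i)) = Set.univ.pi fun i => {g i} := by
    ext v
    simp [funext_iff, Set.mem_pi]
  rw [h, Measure.pi_pi]

lemma edge_row {k l : ℕ} (r : ℝ) (i : Fin k) (c : Fin l → Bool) :
    edgeMeasure k l r {f | f i = c} = ∏ a, bern r {c a} := by
  classical
  have h1 : {f : Fin k → Fin l → Bool | f i = c}
      = Set.univ.pi fun w => if w = i then {c} else Set.univ := by
    ext f
    simp only [Set.mem_setOf_eq, Set.mem_pi, Set.mem_univ, forall_true_left]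
    constructor
    · intro h w
      by_cases hw : w = i
      · subst hw; simp [h]
      · simp [hw]
    · intro h
      have := h i
      simpa using this
  rw [edgeMeasure, h1, Measure.pi_pi]
  have h2 : ∀ w : Fin k,
      (Measure.pi fun _ : Fin l => bern r) (if w = i then {c} else Set.univ)
        = if w = i then (Measure.pi fun _ : Fin l => bern r) {c} else 1 := by
    intro w
    by_cases hw : w = i
    · rw [if_pos hw, if_pos hw]
    · rw [if_neg hw, if_neg hw, measure_univ]
  rw [Finset.prod_congr rfl fun w _ => h2 w, Finset.prod_ite_eq' univ i
    (fun _ => (Measure.pi fun _ : Fin l => bern r) {c}), if_pos (Finset.mem_univ i),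
    pi_singleton]

lemma edge_two_rows {k l : ℕ} (r : ℝ) {i i' : Fin k} (hne : i ≠ i') (c c' : Fin l → Bool) :
    edgeMeasure k l r {f | f i = c ∧ f i' = c'}
      = (∏ a, bern r {c a}) * ∏ a, bern r {c' a} := by
  classical
  have h1 : {f : Fin k → Fin l → Bool | f i = c ∧ f i' = c'}
      = Set.univ.pi fun w => if w = i then {c} else if w = i' then {c'} else Set.univ := by
    ext f
    simp only [Set.mem_setOf_eq, Set.mem_pi, Set.mem_univ, forall_true_left]
    constructor
    · rintro ⟨hc, hc'⟩ w
      by_cases hw : w = i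
      · subst hw; simp [hc, hne]
      · by_cases hw' : w = i'
        · subst hw'; simp [hc', hw]
        · simp [hw, hw']
    · intro h
      constructor
      · have := h i; simpa using this
      · have := h i'; simpa [Ne.symm hne] using this
  rw [edgeMeasure, h1, Measure.pi_pi]
  have h2 : ∀ w : Fin k,
      (Measure.pi fun _ : Fin l => bern r) (if w = i then {c} else if w = i' then {c'} else Set.univ)
        = if w = i then (Measure.pi fun _ : Fin l => bern r) {c}
          else if w = i' then (Measure.pi fun _ : Fin l => bern r) {c'} else 1 := by
    intro w
    by_cases hw : w = i
    · rw [if_pos hw, if_pos hw]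
    · by_cases hw' : w = i'
      · rw [if_neg hw, if_pos hw', if_neg hw, if_pos hw']
      · rw [if_neg hw, if_neg hw', if_neg hw, if_neg hw', measure_univ]
  rw [Finset.prod_congr rfl fun w _ => h2 w]
  rw [← Finset.prod_subset (Finset.subset_univ ({i, i'} : Finset (Fin k)))
    (fun w _ hw => by
      simp only [Finset.mem_insert, Finset.mem_singleton, not_or] at hw
      simp [hw.1, hw.2])]
  rw [Finset.prod_pair hne, if_pos rfl, if_neg (Ne.symm hne), if_pos rfl,
    pi_singleton, pi_singleton]


open scoped ENNReal NNReal
set_option synthInstance.maxHeartbeats 1000000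
set_option maxHeartbeats 1000000

variable {n m : ℕ}

def P3 : Bool × Bool × Bool → Prop := fun b => b.1 = true ∧ b.2.1 = true ∧ b.2.2 = true

instance : DecidablePred P3 := fun b => by unfold P3; infer_instance

def P4 : (Bool × Bool) × Bool × Bool → Prop :=
  fun b => b.1.1 = true ∧ b.1.2 = true ∧ b.2.1 = true ∧ b.2.2 = true

instance : DecidablePred P4 := fun b => by unfold P4; infer_instance

def Phi (i : Fin n) (ω : Config n m) : Fin m → Bool × Bool × Bool :=
  fun a => (ua0 ω i a, saG1 ω i a, saG2 ω i a)

def Psi (i i' : Fin n) (ω : Config n m) : Fin m → (Bool × Bool) × Bool × Bool :=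
  fun a => ((ua0 ω i a, saG1 ω i a), (ua0 ω i' a, saG2 ω i' a))

def nu3 (q sa : ℝ) : Measure (Bool × Bool × Bool) :=
  (bern q).prod ((bern sa).prod (bern sa))

def nu4 (q sa : ℝ) : Measure ((Bool × Bool) × Bool × Bool) :=
  ((bern q).prod (bern sa)).prod ((bern q).prod (bern sa))

instance (q sa : ℝ) : IsProbabilityMeasure (nu3 q sa) := by unfold nu3; infer_instance
instance (q sa : ℝ) : IsProbabilityMeasure (nu4 q sa) := by unfold nu4; infer_instance

lemma measurable_Phi (i : Fin n) : Measurable (Phi i : Config n m → _) := by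
  unfold Phi ua0 saG1 saG2
  refine measurable_pi_lambda _ fun a => ?_
  refine Measurable.prodMk ?_ (Measurable.prodMk ?_ ?_)
  · exact (measurable_pi_apply a).comp ((measurable_pi_apply i).comp
      (measurable_fst.comp measurable_snd))
  · exact (measurable_pi_apply a).comp ((measurable_pi_apply i).comp
      (measurable_fst.comp (measurable_snd.comp (measurable_snd.comp measurable_snd))))
  · exact (measurable_pi_apply a).comp ((measurable_pi_apply i).comp
      (measurable_fst.comp (measurable_snd.comp (measurable_snd.comp
        (measurable_snd.comp (measurable_snd.comp measurable_snd))))))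

lemma measurable_Psi (i i' : Fin n) : Measurable (Psi i i' : Config n m → _) := by
  unfold Psi ua0 saG1 saG2
  refine measurable_pi_lambda _ fun a => ?_
  refine Measurable.prodMk (Measurable.prodMk ?_ ?_) (Measurable.prodMk ?_ ?_)
  · exact (measurable_pi_apply a).comp ((measurable_pi_apply i).comp
      (measurable_fst.comp measurable_snd))
  · exact (measurable_pi_apply a).comp ((measurable_pi_apply i).comp
      (measurable_fst.comp (measurable_snd.comp (measurable_snd.comp measurable_snd))))
  · exact (measurable_pi_apply a).comp ((measurable_pi_apply i').comp
      (measurable_fst.comp measurable_snd))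
  · exact (measurable_pi_apply a).comp ((measurable_pi_apply i').comp
      (measurable_fst.comp (measurable_snd.comp (measurable_snd.comp
        (measurable_snd.comp (measurable_snd.comp measurable_snd))))))

lemma nu3_singleton (q sa : ℝ) (b : Bool × Bool × Bool) :
    nu3 q sa {b} = bern q {b.1} * (bern sa {b.2.1} * bern sa {b.2.2}) := by
  have hb : ({b} : Set (Bool × Bool × Bool)) = {b.1} ×ˢ ({b.2.1} ×ˢ {b.2.2}) := by
    ext c
    simp [Prod.ext_iff, and_assoc]
  rw [nu3, hb, Measure.prod_prod, Measure.prod_prod]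

lemma nu4_singleton (q sa : ℝ) (b : (Bool × Bool) × Bool × Bool) :
    nu4 q sa {b} = (bern q {b.1.1} * bern sa {b.1.2}) * (bern q {b.2.1} * bern sa {b.2.2}) := by
  have hb : ({b} : Set ((Bool × Bool) × Bool × Bool))
      = ({b.1.1} ×ˢ {b.1.2}) ×ˢ ({b.2.1} ×ˢ {b.2.2}) := by
    ext c
    simp [Prod.ext_iff, and_assoc]
  rw [nu4, hb, Measure.prod_prod, Measure.prod_prod, Measure.prod_prod]

lemma map_Phi (i : Fin n) (p q su sa : ℝ) :
    (attrMeasure n m p q su sa).map (Phi i) = Measure.pi fun _ : Fin m => nu3 q sa := by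
  apply measure_ext_singleton
  intro g
  rw [Measure.map_apply (measurable_Phi i) (measurableSet_singleton g)]
  have hpre : (Phi i : Config n m → _) ⁻¹' {g} =
      (Set.univ : Set (Fin n → Fin n → Bool)) ×ˢ
        ({f : Fin n → Fin m → Bool | f i = fun a => (g a).1} ×ˢ
          ((Set.univ : Set (Fin n → Fin n → Bool)) ×ˢ
            ({f : Fin n → Fin m → Bool | f i = fun a => (g a).2.1} ×ˢ
              ((Set.univ : Set (Fin n → Fin n → Bool)) ×ˢ
                ({f : Fin n → Fin m → Bool | f i = fun a => (g a).2.2} ×ˢ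
                  (Set.univ : Set (Equiv.Perm (Fin n)))))))) := by
    ext ω
    simp only [Set.mem_preimage, Set.mem_singleton_iff, Set.mem_prod, Set.mem_univ, true_and,
      and_true, Set.mem_setOf_eq, Phi, ua0, saG1, saG2, funext_iff, Prod.ext_iff]
    constructor
    · intro h
      exact ⟨fun a => (h a).1, fun a => (h a).2.1, fun a => (h a).2.2⟩
    · intro h a
      exact ⟨h.1 a, h.2.1 a, h.2.2 a⟩
  rw [hpre, attrMeasure, Measure.prod_prod, Measure.prod_prod, Measure.prod_prod,
    Measure.prod_prod, Measure.prod_prod, Measure.prod_prod]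
  simp only [measure_univ, one_mul, mul_one]
  rw [edge_row, edge_row, edge_row, pi_singleton]
  rw [Finset.prod_congr rfl fun a _ => nu3_singleton q sa (g a), Finset.prod_mul_distrib,
    Finset.prod_mul_distrib]

lemma map_Psi {i i' : Fin n} (hne : i ≠ i') (p q su sa : ℝ) :
    (attrMeasure n m p q su sa).map (Psi i i') = Measure.pi fun _ : Fin m => nu4 q sa := by
  apply measure_ext_singleton
  intro g
  rw [Measure.map_apply (measurable_Psi i i') (measurableSet_singleton g)]
  have hpre : (Psi i i' : Config n m → _) ⁻¹' {g} =
      (Set.univ : Set (Fin n → Fin n → Bool)) ×ˢ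
        ({f : Fin n → Fin m → Bool | f i = (fun a => (g a).1.1) ∧ f i' = fun a => (g a).2.1} ×ˢ
          ((Set.univ : Set (Fin n → Fin n → Bool)) ×ˢ
            ({f : Fin n → Fin m → Bool | f i = fun a => (g a).1.2} ×ˢ
              ((Set.univ : Set (Fin n → Fin n → Bool)) ×ˢ
                ({f : Fin n → Fin m → Bool | f i' = fun a => (g a).2.2} ×ˢ
                  (Set.univ : Set (Equiv.Perm (Fin n)))))))) := by
    ext ω
    simp only [Set.mem_preimage, Set.mem_singleton_iff, Set.mem_prod, Set.mem_univ, true_and,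
      and_true, Set.mem_setOf_eq, Psi, ua0, saG1, saG2, funext_iff, Prod.ext_iff]
    constructor
    · intro h
      exact ⟨⟨fun a => (h a).1.1, fun a => (h a).2.1⟩, fun a => (h a).1.2, fun a => (h a).2.2⟩
    · intro h a
      exact ⟨⟨h.1.1 a, h.2.1 a⟩, h.1.2 a, h.2.2 a⟩
  rw [hpre, attrMeasure, Measure.prod_prod, Measure.prod_prod, Measure.prod_prod,
    Measure.prod_prod, Measure.prod_prod, Measure.prod_prod]
  simp only [measure_univ, one_mul, mul_one]
  rw [edge_two_rows _ hne, edge_row, edge_row, pi_singleton]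
  rw [Finset.prod_congr rfl fun a _ => nu4_singleton q sa (g a), Finset.prod_mul_distrib,
    Finset.prod_mul_distrib, Finset.prod_mul_distrib]
  ring

lemma nu3_P3 {q sa : ℝ} (hq0 : 0 ≤ q) (hq1 : q ≤ 1) (hsa0 : 0 ≤ sa) (hsa1 : sa ≤ 1) :
    nu3 q sa {b | P3 b} = ENNReal.ofReal (q * sa ^ 2) := by
  have h1 : {b | P3 b} = ({(true, true, true)} : Set (Bool × Bool × Bool)) := by
    ext b
    simp [P3, Prod.ext_iff]
  rw [h1, nu3_singleton, bern_true hq0 hq1, bern_true hsa0 hsa1,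
    ← ENNReal.ofReal_mul hsa0, ← ENNReal.ofReal_mul hq0]
  rw [show sa * sa = sa ^ 2 by ring]

lemma nu4_P4 {q sa : ℝ} (hq0 : 0 ≤ q) (hq1 : q ≤ 1) (hsa0 : 0 ≤ sa) (hsa1 : sa ≤ 1) :
    nu4 q sa {b | P4 b} = ENNReal.ofReal ((q * sa) * (q * sa)) := by
  have h1 : {b | P4 b} = ({((true, true), true, true)} : Set ((Bool × Bool) × Bool × Bool)) := by
    ext b
    simp [P4, Prod.ext_iff, and_assoc]
  rw [h1, nu4_singleton, bern_true hq0 hq1, bern_true hsa0 hsa1,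
    ← ENNReal.ofReal_mul hq0, ← ENNReal.ofReal_mul (by positivity : (0:ℝ) ≤ q * sa)]

lemma CC_diag (ω : Config n m) (i : Fin n) :
    CC ω i (pstar ω i) = cnt P3 (Phi i ω) := by
  unfold CC cnt
  congr 1
  ext a
  rw [Finset.mem_filter, Finset.mem_filter]
  simp only [Finset.mem_filter, Finset.mem_univ, true_and, G1ua, G2pua, G2ua,
    Equiv.symm_apply_apply, Phi, P3, Bool.and_eq_true]
  tauto

lemma CC_off (ω : Config n m) (i j : Fin n) :
    CC ω i j = cnt P4 (Psi i ((pstar ω).symm j) ω) := by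
  unfold CC cnt
  congr 1
  ext a
  rw [Finset.mem_filter, Finset.mem_filter]
  simp only [Finset.mem_filter, Finset.mem_univ, true_and, G1ua, G2pua, G2ua,
    Psi, P4, Bool.and_eq_true]
  tauto

lemma cover (x : ℝ) (ω : Config n m)
    (hω : ω ∈ ({ω : Config n m | ∀ i j : Fin n, (x < (CC ω i j : ℝ) ↔ j = pstar ω i)})ᶜ) :
    ω ∈ (⋃ i, {ω : Config n m | (cnt P3 (Phi i ω) : ℝ) ≤ x}) ∪
        ⋃ i, ⋃ i', ⋃ (_ : i ≠ i'), {ω : Config n m | x < (cnt P4 (Psi i i' ω) : ℝ)} := by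
  simp only [Set.mem_compl_iff, Set.mem_setOf_eq, not_forall] at hω
  obtain ⟨i, j, hij⟩ := hω
  by_cases h : j = pstar ω i
  · left
    refine Set.mem_iUnion.2 ⟨i, ?_⟩
    have hC : CC ω i j = cnt P3 (Phi i ω) := by rw [h]; exact CC_diag ω i
    simp only [Set.mem_setOf_eq]
    rw [← hC]
    exact not_lt.1 fun hA => hij (iff_of_true hA h)
  · right
    have hlt : x < (CC ω i j : ℝ) := by
      by_contra hle
      exact hij (iff_of_false hle h)
    refine Set.mem_iUnion.2 ⟨i, Set.mem_iUnion.2 ⟨(pstar ω).symm j, Set.mem_iUnion.2 ⟨?_, ?_⟩⟩⟩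
    · intro heq
      exact h ((Equiv.symm_apply_eq _).1 heq.symm)
    · simp only [Set.mem_setOf_eq]
      rw [← CC_off ω i j]
      exact hlt


open scoped ENNReal NNReal
set_option maxHeartbeats 1000000
set_option synthInstance.maxHeartbeats 1000000

lemma main_bound (n m : ℕ) (p q su sa x : ℝ)
    (hq0 : 0 < q) (hq1 : q < 1) (hsa0 : 0 < sa) (hsa1 : sa ≤ 1) (hx0 : 0 ≤ x)
    (hL1 : 1 ≤ Real.log (1 / q)) :
    attrMeasure n m p q su sa
      {ω : Config n m | ∀ i j : Fin n, (x < (CC ω i j : ℝ) ↔ j = pstar ω i)}ᶜ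
      ≤ ENNReal.ofReal
        ((n : ℝ) * (((1 - q * sa ^ 2) + (q * sa ^ 2) * (1 / Real.log (1 / q))) ^ m
            / (1 / Real.log (1 / q)) ^ ⌊x⌋₊)
         + (n : ℝ) ^ 2 * (((1 - (q * sa) * (q * sa)) + ((q * sa) * (q * sa)) * (1 / (q * Real.log (1 / q)))) ^ m
            / (1 / (q * Real.log (1 / q))) ^ (⌊x⌋₊ + 1))) := by
  classical
  set L := Real.log (1 / q) with hLdef
  have hL0 : 0 < L := lt_of_lt_of_le one_pos hL1
  set t1 : ℝ := 1 / L with ht1def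
  set t2 : ℝ := 1 / (q * L) with ht2def
  have ht1pos : 0 < t1 := by positivity
  have ht1le : t1 ≤ 1 := by
    rw [ht1def, div_le_one hL0]; exact hL1
  have hqL : q * L ≤ 1 := by
    have hlog : L ≤ 1 / q - 1 := Real.log_le_sub_one_of_pos (by positivity)
    have h2 : q * L ≤ q * (1 / q - 1) := mul_le_mul_of_nonneg_left hlog hq0.le
    have h3 : q * (1 / q - 1) = 1 - q := by field_simp
    nlinarith
  have ht2ge : 1 ≤ t2 := by
    rw [ht2def, le_div_iff₀ (by positivity)]
    linarith
  have hr1a : 0 ≤ q * sa ^ 2 := by positivity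
  have hr1b : q * sa ^ 2 ≤ 1 := by nlinarith [sq_nonneg sa, sq_nonneg (1 - sa)]
  have hr2a : 0 ≤ (q * sa) * (q * sa) := by positivity
  have hr2b : (q * sa) * (q * sa) ≤ 1 := by nlinarith
  set blow : ℝ := ((1 - q * sa ^ 2) + (q * sa ^ 2) * t1) ^ m / t1 ^ ⌊x⌋₊ with hblowdef
  set bup : ℝ := ((1 - (q * sa) * (q * sa)) + ((q * sa) * (q * sa)) * t2) ^ m / t2 ^ (⌊x⌋₊ + 1)
    with hbupdef
  have hblow0 : 0 ≤ blow := by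
    rw [hblowdef]
    apply div_nonneg _ (by positivity)
    apply pow_nonneg
    nlinarith
  have hbup0 : 0 ≤ bup := by
    rw [hbupdef]
    apply div_nonneg _ (by positivity)
    apply pow_nonneg
    nlinarith
  set SG : Set (Config n m) :=
    {ω : Config n m | ∀ i j : Fin n, (x < (CC ω i j : ℝ) ↔ j = pstar ω i)} with hSGdef
  set A : Fin n → Set (Config n m) :=
    fun i => {ω : Config n m | (cnt P3 (Phi i ω) : ℝ) ≤ x} with hAdef
  set Bs : Fin n → Fin n → Set (Config n m) :=
    fun i i' => {ω : Config n m | x < (cnt P4 (Psi i i' ω) : ℝ)} with hBdef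
  have hA : ∀ i, attrMeasure n m p q su sa (A i) ≤ ENNReal.ofReal blow := by
    intro i
    have hAeq : A i = Phi i ⁻¹' {v : Fin m → Bool × Bool × Bool |
        (fun j : ℕ => (j : ℝ) ≤ x) (cnt P3 v)} := rfl
    rw [hAeq, ← Measure.map_apply (measurable_Phi i) MeasurableSet.of_discrete,
      map_Phi i p q su sa]
    refine pi_tail_le _ P3 (fun j : ℕ => (j : ℝ) ≤ x) ⌊x⌋₊ (q * sa ^ 2) t1 hr1a hr1b
      (nu3_P3 hq0.le hq1.le hsa0.le hsa1) ht1pos ?_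
      (by exact pi_cnt_eq (nu3 q sa) P3 (fun j : ℕ => (j : ℝ) ≤ x))
    intro j hj
    exact pow_le_pow_of_le_one ht1pos.le ht1le (Nat.le_floor hj)
  have hB : ∀ i i', i ≠ i' → attrMeasure n m p q su sa (Bs i i') ≤ ENNReal.ofReal bup := by
    intro i i' hne
    have hBeq : Bs i i' = Psi i i' ⁻¹' {v : Fin m → (Bool × Bool) × Bool × Bool |
        (fun j : ℕ => x < (j : ℝ)) (cnt P4 v)} := rfl
    rw [hBeq, ← Measure.map_apply (measurable_Psi i i') MeasurableSet.of_discrete,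
      map_Psi hne p q su sa]
    refine pi_tail_le _ P4 (fun j : ℕ => x < (j : ℝ)) (⌊x⌋₊ + 1) ((q * sa) * (q * sa)) t2 hr2a hr2b
      (nu4_P4 hq0.le hq1.le hsa0.le hsa1) (lt_of_lt_of_le one_pos ht2ge) ?_
      (by exact pi_cnt_eq (nu4 q sa) P4 (fun j : ℕ => x < (j : ℝ)))
    intro j hj
    exact pow_le_pow_right₀ ht2ge (Nat.floor_lt hx0 |>.2 hj)
  have hcov : SGᶜ ⊆ (⋃ i, A i) ∪ ⋃ i, ⋃ i', ⋃ (_ : i ≠ i'), Bs i i' :=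
    fun ω hω => cover x ω hω
  have hBU : ∀ i i', attrMeasure n m p q su sa (⋃ (_ : i ≠ i'), Bs i i')
      ≤ ENNReal.ofReal bup := by
    intro i i'
    by_cases h : i = i'
    · subst h
      haveI : IsEmpty (i ≠ i) := ⟨fun hh => hh rfl⟩
      rw [Set.iUnion_of_empty, measure_empty]
      exact zero_le
    · haveI : Nonempty (i ≠ i') := ⟨h⟩
      rw [Set.iUnion_const]
      exact hB i i' h
  calc attrMeasure n m p q su sa SGᶜ
      ≤ attrMeasure n m p q su sa ((⋃ i, A i) ∪ ⋃ i, ⋃ i', ⋃ (_ : i ≠ i'), Bs i i') :=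
        measure_mono hcov
    _ ≤ attrMeasure n m p q su sa (⋃ i, A i)
        + attrMeasure n m p q su sa (⋃ i, ⋃ i', ⋃ (_ : i ≠ i'), Bs i i') :=
        measure_union_le _ _
    _ ≤ (n : ℝ≥0∞) * ENNReal.ofReal blow + (n : ℝ≥0∞) * ((n : ℝ≥0∞) * ENNReal.ofReal bup) := by
        gcongr ?_ + ?_
        · calc attrMeasure n m p q su sa (⋃ i, A i) ≤ ∑' i, attrMeasure n m p q su sa (A i) :=
              measure_iUnion_le A
            _ = ∑ i, attrMeasure n m p q su sa (A i) := tsum_fintype _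
            _ ≤ ∑ _i : Fin n, ENNReal.ofReal blow := Finset.sum_le_sum fun i _ => hA i
            _ = (n : ℝ≥0∞) * ENNReal.ofReal blow := by
                rw [Finset.sum_const, Finset.card_univ, Fintype.card_fin, nsmul_eq_mul]
        · calc attrMeasure n m p q su sa (⋃ i, ⋃ i', ⋃ (_ : i ≠ i'), Bs i i')
              ≤ ∑' i, attrMeasure n m p q su sa (⋃ i', ⋃ (_ : i ≠ i'), Bs i i') :=
              measure_iUnion_le _
            _ = ∑ i, attrMeasure n m p q su sa (⋃ i', ⋃ (_ : i ≠ i'), Bs i i') := tsum_fintype _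
            _ ≤ ∑ _i : Fin n, (n : ℝ≥0∞) * ENNReal.ofReal bup := by
                apply Finset.sum_le_sum
                intro i _
                calc attrMeasure n m p q su sa (⋃ i', ⋃ (_ : i ≠ i'), Bs i i')
                    ≤ ∑' i', attrMeasure n m p q su sa (⋃ (_ : i ≠ i'), Bs i i') :=
                    measure_iUnion_le _
                  _ = ∑ i', attrMeasure n m p q su sa (⋃ (_ : i ≠ i'), Bs i i') := tsum_fintype _
                  _ ≤ ∑ _i' : Fin n, ENNReal.ofReal bup := Finset.sum_le_sum fun i' _ => hBU i i'
                  _ = (n : ℝ≥0∞) * ENNReal.ofReal bup := by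
                      rw [Finset.sum_const, Finset.card_univ, Fintype.card_fin, nsmul_eq_mul]
            _ = (n : ℝ≥0∞) * ((n : ℝ≥0∞) * ENNReal.ofReal bup) := by
                rw [Finset.sum_const, Finset.card_univ, Fintype.card_fin, nsmul_eq_mul]
    _ = ENNReal.ofReal ((n : ℝ) * blow + (n : ℝ) ^ 2 * bup) := by
        rw [ENNReal.ofReal_add (mul_nonneg (Nat.cast_nonneg n) hblow0)
            (mul_nonneg (by positivity) hbup0),
          ENNReal.ofReal_mul (Nat.cast_nonneg n), ENNReal.ofReal_mul (by positivity),
          ENNReal.ofReal_natCast, ENNReal.ofReal_pow (Nat.cast_nonneg n), ENNReal.ofReal_natCast]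
        ring

open scoped ENNReal NNReal
set_option maxHeartbeats 1000000

lemma real_chain (m n : ℕ) (q sa ε Δ : ℝ)
    (hq0 : 0 < q) (hq1 : q < 1) (hsa0 : 0 < sa) (hsa1 : sa ≤ 1) (hε : 0 < ε)
    (hΔ1 : 1 ≤ Δ) (hΔ3 : 3 ≤ (1 + ε) * Δ)
    (hL1 : 1 ≤ Real.log (1 / q))
    (hn1 : 1 ≤ (n : ℝ))
    (hlogn : 1 ≤ Real.log n)
    (hmean : (1 + ε) * Real.log n ≤ (m : ℝ) * q * sa ^ 2)
    (hsmall : (1 + ε) * ((1 + Δ * Real.log (Real.log (1 / q))) / Real.log (1 / q))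
        ≤ min (ε / 2) (1 / 2)) :
    (n : ℝ) * (((1 - q * sa ^ 2) + (q * sa ^ 2) * (1 / Real.log (1 / q))) ^ m
        / (1 / Real.log (1 / q)) ^ ⌊Δ * ((m : ℝ) * q * sa ^ 2) / Real.log (1 / q)⌋₊)
      + (n : ℝ) ^ 2 * (((1 - (q * sa) * (q * sa)) + ((q * sa) * (q * sa)) * (1 / (q * Real.log (1 / q)))) ^ m
        / (1 / (q * Real.log (1 / q))) ^ (⌊Δ * ((m : ℝ) * q * sa ^ 2) / Real.log (1 / q)⌋₊ + 1))
      ≤ Real.exp (-(ε / 2) * Real.log n) + Real.exp (-(1 / 2) * Real.log n) := by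
  set L : ℝ := Real.log (1 / q) with hLdef
  have hL0 : 0 < L := lt_of_lt_of_le one_pos hL1
  have hlogL0 : 0 ≤ Real.log L := Real.log_nonneg hL1
  set μ : ℝ := (m : ℝ) * q * sa ^ 2 with hμdef
  set x : ℝ := Δ * μ / L with hxdef
  set η : ℝ := (1 + Δ * Real.log L) / L with hηdef
  set t1 : ℝ := 1 / L with ht1def
  set t2 : ℝ := 1 / (q * L) with ht2def
  set logn : ℝ := Real.log n with hlogndef
  have hη0 : 0 ≤ η := by
    apply div_nonneg _ hL0.le
    have := mul_nonneg (le_trans zero_le_one hΔ1) hlogL0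
    linarith
  have hη12 : η ≤ 1 / 2 := by
    have h1 := le_trans hsmall (min_le_right (ε/2) (1/2))
    have h2 : (0:ℝ) ≤ ε * η := mul_nonneg hε.le hη0
    nlinarith
  have hημ : η * μ = μ / L + Δ * μ * Real.log L / L := by
    rw [hηdef]; field_simp
  have hμpos : 0 < μ := by
    have h1 : (1 + ε) * 1 ≤ (1 + ε) * Real.log n :=
      mul_le_mul_of_nonneg_left hlogn (by linarith)
    linarith
  have hx0 : 0 ≤ x := by
    rw [hxdef]
    apply div_nonneg _ hL0.le
    exact mul_nonneg (le_trans zero_le_one hΔ1) hμpos.le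
  have hr1a : 0 ≤ q * sa ^ 2 := by positivity
  have hr1b : q * sa ^ 2 ≤ 1 := by nlinarith [sq_nonneg sa, sq_nonneg (1 - sa)]
  have hr2a : 0 ≤ (q * sa) * (q * sa) := by positivity
  have hr2b : (q * sa) * (q * sa) ≤ 1 := by nlinarith
  have ht1pos : 0 < t1 := by positivity
  have hqL : q * L ≤ 1 := by
    have hlog : L ≤ 1 / q - 1 := Real.log_le_sub_one_of_pos (by positivity)
    have h2 : q * L ≤ q * (1 / q - 1) := mul_le_mul_of_nonneg_left hlog hq0.le
    have h3 : q * (1 / q - 1) = 1 - q := by field_simp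
    linarith
  have ht2pos : 0 < t2 := by positivity
  have hlogt1 : Real.log t1 = -Real.log L := by
    rw [ht1def, one_div, Real.log_inv]
  have hlogq : Real.log q = -L := by
    rw [hLdef, one_div, Real.log_inv, neg_neg]
  have hlogt2 : Real.log t2 = L - Real.log L := by
    rw [ht2def, one_div, Real.log_inv, Real.log_mul hq0.ne' hL0.ne', hlogq]
    ring
  have hlogt2nn : 0 ≤ Real.log t2 := by
    rw [hlogt2]
    have := Real.log_le_sub_one_of_pos hL0
    linarith
  have hexplogn : (n : ℝ) = Real.exp logn :=
    (Real.exp_log (lt_of_lt_of_le one_pos hn1)).symm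
  have hsm1 : (1 + ε) * η ≤ ε / 2 := le_trans hsmall (min_le_left _ _)
  have hsm2 : (1 + ε) * η ≤ 1 / 2 := le_trans hsmall (min_le_right _ _)
  have hlogn0 : 0 ≤ logn := by linarith
  -- piece 1
  have hp1 : (n : ℝ) * (((1 - q * sa ^ 2) + (q * sa ^ 2) * t1) ^ m / t1 ^ ⌊x⌋₊)
      ≤ Real.exp (-(ε / 2) * logn) := by
    have hk : x * Real.log t1 ≤ (⌊x⌋₊ : ℝ) * Real.log t1 := by
      apply mul_le_mul_of_nonpos_right (Nat.floor_le hx0)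
      rw [hlogt1]
      linarith
    have hbd := tail_exp_bound m ⌊x⌋₊ (q * sa ^ 2) t1 x hr1a hr1b ht1pos hk
    have hE1 : (m : ℝ) * (q * sa ^ 2 * (t1 - 1)) - x * Real.log t1 = -((1 - η) * μ) := by
      rw [hlogt1, ht1def, hxdef, hηdef, hμdef]
      field_simp
      ring
    rw [hE1] at hbd
    calc (n : ℝ) * (((1 - q * sa ^ 2) + (q * sa ^ 2) * t1) ^ m / t1 ^ ⌊x⌋₊)
        ≤ Real.exp logn * Real.exp (-((1 - η) * μ)) := by
          rw [hexplogn]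
          apply mul_le_mul_of_nonneg_left hbd (Real.exp_nonneg _)
      _ = Real.exp (logn - (1 - η) * μ) := by rw [← Real.exp_add]; ring_nf
      _ ≤ Real.exp (-(ε / 2) * logn) := by
          apply Real.exp_le_exp.2
          have h1 : (1 - η) * ((1 + ε) * logn) ≤ (1 - η) * μ :=
            mul_le_mul_of_nonneg_left hmean (by linarith)
          have h3 : (1 + ε) * η * logn ≤ (ε / 2) * logn :=
            mul_le_mul_of_nonneg_right hsm1 hlogn0
          have hexp1 : (1 - η) * ((1 + ε) * logn)
              = (1 + ε) * logn - (1 + ε) * η * logn := by ring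
          linarith
  -- piece 2
  have hp2 : (n : ℝ) ^ 2 * (((1 - (q * sa) * (q * sa)) + ((q * sa) * (q * sa)) * t2) ^ m
        / t2 ^ (⌊x⌋₊ + 1))
      ≤ Real.exp (-(1 / 2) * logn) := by
    have hk : x * Real.log t2 ≤ ((⌊x⌋₊ + 1 : ℕ) : ℝ) * Real.log t2 := by
      apply mul_le_mul_of_nonneg_right _ hlogt2nn
      push_cast
      exact (Nat.lt_floor_add_one x).le
    have hbd := tail_exp_bound m (⌊x⌋₊ + 1) ((q * sa) * (q * sa)) t2 x hr2a hr2b ht2pos hk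
    have hE2 : (m : ℝ) * ((q * sa) * (q * sa) * (t2 - 1)) - x * Real.log t2
        = -((Δ - η) * μ) - (m : ℝ) * ((q * sa) * (q * sa)) := by
      rw [hlogt2, ht2def, hxdef, hηdef, hμdef]
      field_simp
      ring
    rw [hE2] at hbd
    have hbd2 : ((1 - (q * sa) * (q * sa)) + ((q * sa) * (q * sa)) * t2) ^ m / t2 ^ (⌊x⌋₊ + 1)
        ≤ Real.exp (-((Δ - η) * μ)) := by
      refine le_trans hbd (Real.exp_le_exp.2 ?_)
      have : 0 ≤ (m : ℝ) * ((q * sa) * (q * sa)) := by positivity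
      linarith
    calc (n : ℝ) ^ 2 * (((1 - (q * sa) * (q * sa)) + ((q * sa) * (q * sa)) * t2) ^ m
          / t2 ^ (⌊x⌋₊ + 1))
        ≤ Real.exp (2 * logn) * Real.exp (-((Δ - η) * μ)) := by
          apply mul_le_mul _ hbd2 _ (Real.exp_nonneg _)
          · rw [hexplogn, sq, ← Real.exp_add, two_mul]
          · refine div_nonneg (pow_nonneg ?_ m) (by positivity)
            have := mul_nonneg hr2a ht2pos.le
            linarith
      _ = Real.exp (2 * logn - (Δ - η) * μ) := by rw [← Real.exp_add]; ring_nf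
      _ ≤ Real.exp (-(1 / 2) * logn) := by
          apply Real.exp_le_exp.2
          have hΔη0 : 0 ≤ Δ - η := by linarith
          have h1 : (Δ - η) * ((1 + ε) * logn) ≤ (Δ - η) * μ :=
            mul_le_mul_of_nonneg_left hmean hΔη0
          have h3 : (1 + ε) * η * logn ≤ (1 / 2) * logn :=
            mul_le_mul_of_nonneg_right hsm2 hlogn0
          have h4 : 3 * logn ≤ (1 + ε) * Δ * logn :=
            mul_le_mul_of_nonneg_right hΔ3 hlogn0
          have hexp2 : (Δ - η) * ((1 + ε) * logn)
              = (1 + ε) * Δ * logn - (1 + ε) * η * logn := by ring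
          linarith
  exact add_le_add hp1 hp2


end AttrAlign

open AttrAlign

/-- Specialization to bipartite graph alignment: under the attributed Erdős–Rényi graph
pair model with `q = o(1)`, `s_a = Θ(1)` and `m q s_a² ≥ (1+ε) log n` for a constant
`ε > 0`, Step 1 of Algorithm `AttrRich` with threshold `x = Δ_x m q s_a² / log(1/q)`,
where `Δ_x = max{1, 3/(1+ε)}`, alone exactly recovers `Π*` using only the
user–attribute edges: with probability tending to `1`, the anchor set `S₁` equals
exactly `{(i, Π*(i)) : i a user}`. -/
theorem attrRich_step1_bipartite_alignment
    (p q su sa : ℕ → ℝ) (m : ℕ → ℕ) (ε : ℝ)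
    (hp01 : ∀ n, 0 ≤ p n ∧ p n ≤ 1) (hq01 : ∀ n, 0 < q n ∧ q n < 1)
    (hsu01 : ∀ n, 0 ≤ su n ∧ su n ≤ 1) (hsa01 : ∀ n, 0 < sa n ∧ sa n ≤ 1)
    (hq : Tendsto q atTop (nhds 0))
    (hsa : ∃ c > 0, ∀ᶠ n : ℕ in atTop, c ≤ sa n)
    (hε : 0 < ε)
    (hmean : ∀ᶠ n : ℕ in atTop,
      (1 + ε) * Real.log n ≤ (m n : ℝ) * q n * (sa n) ^ 2) :
    Tendsto (fun n =>
        attrMeasure n (m n) (p n) (q n) (su n) (sa n)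
          {ω : Config n (m n) | ∀ i j : Fin n,
            (max 1 (3 / (1 + ε))) * ((m n : ℝ) * q n * (sa n) ^ 2) / Real.log (1 / q n)
                < (CC ω i j : ℝ)
              ↔ j = pstar ω i})
      atTop (nhds 1) := by
  classical
  set Δ : ℝ := max 1 (3 / (1 + ε)) with hΔdef
  have hΔ1 : 1 ≤ Δ := le_max_left _ _
  have hΔ3 : 3 ≤ (1 + ε) * Δ := by
    have h := le_max_right 1 (3 / (1 + ε))
    calc (3 : ℝ) = (1 + ε) * (3 / (1 + ε)) := by field_simp
      _ ≤ (1 + ε) * Δ := mul_le_mul_of_nonneg_left h (by linarith)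
  have hLtop : Tendsto (fun k : ℕ => Real.log (1 / q k)) atTop atTop := by
    apply Real.tendsto_log_atTop.comp
    have hq0' : Tendsto q atTop (nhdsWithin 0 (Set.Ioi 0)) :=
      tendsto_nhdsWithin_iff.2 ⟨hq, Eventually.of_forall fun k => (hq01 k).1⟩
    simpa [one_div, Pi.inv_def] using hq0'.inv_tendsto_nhdsGT_zero
  have hlognN : Tendsto (fun k : ℕ => Real.log k) atTop atTop :=
    Real.tendsto_log_atTop.comp tendsto_natCast_atTop_atTop
  have hηto : Tendsto
      (fun k => (1 + ε) * ((1 + Δ * Real.log (Real.log (1 / q k))) / Real.log (1 / q k)))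
      atTop (nhds 0) := by
    have h1 : Tendsto (fun k : ℕ => 1 / Real.log (1 / q k)) atTop (nhds 0) := by
      simpa [one_div, Pi.inv_def] using hLtop.inv_tendsto_atTop
    have h2 : Tendsto (fun k : ℕ => Real.log (Real.log (1 / q k)) / Real.log (1 / q k))
        atTop (nhds 0) :=
      (Real.isLittleO_log_id_atTop.tendsto_div_nhds_zero).comp hLtop
    have heq : (fun k : ℕ => (1 + Δ * Real.log (Real.log (1 / q k))) / Real.log (1 / q k))
        = fun k => 1 / Real.log (1 / q k)
            + Δ * (Real.log (Real.log (1 / q k)) / Real.log (1 / q k)) :=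
      funext fun k => by rw [add_div, mul_div_assoc]
    have h3 := (h1.add (h2.const_mul Δ)).const_mul (1 + ε)
    have h4 : Tendsto (fun k : ℕ => (1 + ε) * (1 / Real.log (1 / q k)
        + Δ * (Real.log (Real.log (1 / q k)) / Real.log (1 / q k)))) atTop (nhds 0) := by
      simpa using h3
    exact h4.congr fun k => by rw [add_div, mul_div_assoc]
  have ev5 : ∀ᶠ k : ℕ in atTop,
      (1 + ε) * ((1 + Δ * Real.log (Real.log (1 / q k))) / Real.log (1 / q k))
        ≤ min (ε / 2) (1 / 2) :=
    hηto.eventually_le_const (by positivity)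
  have ev1 : ∀ᶠ k : ℕ in atTop, 1 ≤ Real.log (1 / q k) := hLtop.eventually_ge_atTop 1
  have ev2 : ∀ᶠ k : ℕ in atTop, 1 ≤ Real.log k := hlognN.eventually_ge_atTop 1
  have ev3 : ∀ᶠ k : ℕ in atTop, 1 ≤ (k : ℝ) := by
    filter_upwards [eventually_ge_atTop 1] with k hk
    exact_mod_cast hk
  set d : ℕ → ℝ := fun k =>
    Real.exp (-(ε / 2) * Real.log k) + Real.exp (-(1 / 2) * Real.log k) with hddef
  have hbound : ∀ᶠ k : ℕ in atTop,
      attrMeasure k (m k) (p k) (q k) (su k) (sa k)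
        {ω : Config k (m k) | ∀ i j : Fin k,
          (Δ * ((m k : ℝ) * q k * (sa k) ^ 2) / Real.log (1 / q k) < (CC ω i j : ℝ)
            ↔ j = pstar ω i)}ᶜ ≤ ENNReal.ofReal (d k) := by
    filter_upwards [ev1, ev2, ev3, hmean, ev5] with k h1 h2 h3 h4 h5
    have hx0 : 0 ≤ Δ * ((m k : ℝ) * q k * (sa k) ^ 2) / Real.log (1 / q k) := by
      apply div_nonneg _ (by linarith)
      apply mul_nonneg (le_trans zero_le_one hΔ1)
      have := (hq01 k).1
      have := (hsa01 k).1
      positivity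
    refine le_trans (main_bound k (m k) (p k) (q k) (su k) (sa k)
      (Δ * ((m k : ℝ) * q k * (sa k) ^ 2) / Real.log (1 / q k))
      (hq01 k).1 (hq01 k).2 (hsa01 k).1 (hsa01 k).2 hx0 h1) ?_
    exact ENNReal.ofReal_le_ofReal
      (real_chain (m k) k (q k) (sa k) ε Δ (hq01 k).1 (hq01 k).2 (hsa01 k).1 (hsa01 k).2
        hε hΔ1 hΔ3 h1 h3 h2 h4 h5)
  have hdto : Tendsto d atTop (nhds 0) := by
    have hb1 : Tendsto (fun k : ℕ => -(ε / 2) * Real.log k) atTop atBot :=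
      (tendsto_const_mul_atBot_of_neg (by linarith)).2 hlognN
    have hb2 : Tendsto (fun k : ℕ => -(1 / 2 : ℝ) * Real.log k) atTop atBot :=
      (tendsto_const_mul_atBot_of_neg (by norm_num)).2 hlognN
    have hz : (0 : ℝ) = 0 + 0 := by norm_num
    rw [hddef, hz]
    exact (Real.tendsto_exp_atBot.comp hb1).add (Real.tendsto_exp_atBot.comp hb2)
  have hofReal : Tendsto (fun k => ENNReal.ofReal (d k)) atTop (nhds 0) := by
    simpa using ENNReal.tendsto_ofReal hdto
  have hbadto : Tendsto (fun k : ℕ =>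
      attrMeasure k (m k) (p k) (q k) (su k) (sa k)
        {ω : Config k (m k) | ∀ i j : Fin k,
          (Δ * ((m k : ℝ) * q k * (sa k) ^ 2) / Real.log (1 / q k) < (CC ω i j : ℝ)
            ↔ j = pstar ω i)}ᶜ) atTop (nhds 0) := by
    refine tendsto_of_tendsto_of_tendsto_of_le_of_le' tendsto_const_nhds hofReal
      (Eventually.of_forall fun k => zero_le) hbound
  have hfinal := ENNReal.Tendsto.sub
    (tendsto_const_nhds : Tendsto (fun _ : ℕ => (1 : ℝ≥0∞)) atTop (nhds 1)) hbadto
    (Or.inl ENNReal.one_ne_top)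
  simp only [tsub_zero] at hfinal
  refine hfinal.congr fun k => ?_
  have : attrMeasure k (m k) (p k) (q k) (su k) (sa k)
      {ω : Config k (m k) | ∀ i j : Fin k,
        (Δ * ((m k : ℝ) * q k * (sa k) ^ 2) / Real.log (1 / q k) < (CC ω i j : ℝ)
          ↔ j = pstar ω i)}
      = 1 - attrMeasure k (m k) (p k) (q k) (su k) (sa k)
        {ω : Config k (m k) | ∀ i j : Fin k,
          (Δ * ((m k : ℝ) * q k * (sa k) ^ 2) / Real.log (1 / q k) < (CC ω i j : ℝ)
            ↔ j = pstar ω i)}ᶜ := by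
    rw [← prob_compl_eq_one_sub (Set.toFinite _).measurableSet, compl_compl]
  rw [this]
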